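/- Let U : ℝ → ℝ be a Lipschitz continuous function with Lipschitz constant G, and let N ⊂ ℝ be a Lebesgue negligible set. Then the derivative of U exists and vanishes at almost every point of the preimage U⁻¹(N). More precisely, for a.e. t ∈ U⁻¹(N), U is differentiable at t with U'(t) = 0. -/

import Mathlib

open MeasureTheory Set

/-- If `U` is expansive (inverse-Lipschitz) on a set `E` and the image of `E` is null,
then `E` is null. -/
lemma null_of_expansive_aux (U : ℝ → ℝ) (K : NNReal) (E : Set ℝ)
    (h : ∀ x ∈ E, ∀ y ∈ E, dist x y ≤ K * dist (U x) (U y))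
    (h0 : volume (U '' E) = 0) : volume E = 0 := by
  set g := Function.invFunOn U E with hg
  have hgmem : ∀ y ∈ U '' E, g y ∈ E ∧ U (g y) = y := by
    rintro y ⟨x, hx, rfl⟩
    exact ⟨Function.invFunOn_mem ⟨x, hx, rfl⟩, Function.invFunOn_eq ⟨x, hx, rfl⟩⟩
  have hlip : LipschitzOnWith K g (U '' E) := by
    rw [lipschitzOnWith_iff_dist_le_mul]
    intro a ha b hb
    have h1 := hgmem a ha
    have h2 := hgmem b hb
    calc dist (g a) (g b) ≤ K * dist (U (g a)) (U (g b)) := h _ h1.1 _ h2.1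
      _ = K * dist a b := by rw [h1.2, h2.2]
  have hsubset : E ⊆ g '' (U '' E) := by
    intro t ht
    refine ⟨U t, mem_image_of_mem U ht, ?_⟩
    have h1 := hgmem (U t) (mem_image_of_mem U ht)
    have h2 : dist (g (U t)) t ≤ K * dist (U (g (U t))) (U t) := h _ h1.1 t ht
    rw [h1.2, dist_self, mul_zero] at h2
    exact dist_le_zero.mp h2
  have himle := hlip.hausdorffMeasure_image_le zero_le_one
  rw [← MeasureTheory.hausdorffMeasure_real] at h0 ⊢
  refine le_antisymm ?_ zero_le
  calc μH[1] E ≤ μH[1] (g '' (U '' E)) := measure_mono hsubset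
    _ ≤ (K : ENNReal) ^ (1 : ℝ) * μH[1] (U '' E) := himle
    _ = 0 := by rw [h0, mul_zero]

/-- If `U : ℝ → ℝ` is `G`-Lipschitz and `N` is Lebesgue negligible, then for a.e.
point `t` of the preimage `U ⁻¹' N`, `U` is differentiable at `t` with derivative `0`. -/
theorem lipschitz_deriv_zero_ae_on_preimage_null
    (U : ℝ → ℝ) (G : NNReal) (hU : LipschitzWith G U)
    (N : Set ℝ) (hN : volume N = 0) :
    ∀ᵐ t ∂(volume.restrict (U ⁻¹' N)), HasDerivAt U 0 t := by
  set N' := toMeasurable volume N with hN'def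
  have hN'0 : volume N' = 0 := by rw [measure_toMeasurable]; exact hN
  have hsub : U ⁻¹' N ⊆ U ⁻¹' N' := preimage_mono (subset_toMeasurable _ _)
  have hmeas : MeasurableSet (U ⁻¹' N') :=
    (measurableSet_toMeasurable volume N).preimage hU.continuous.measurable
  refine ((ae_restrict_iff' hmeas).mpr ?_).filter_mono
    (ae_mono (Measure.restrict_mono hsub le_rfl))
  -- It suffices to show that the "bad" set is null.
  set E : ℕ → ℤ → Set ℝ := fun n k =>
    {t | t ∈ U ⁻¹' N' ∧ (∀ y : ℝ, |y - t| ≤ 1 / (n + 1) → |y - t| ≤ (n + 1) * |U y - U t|)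
        ∧ t ∈ Icc ((k : ℝ) / (n + 1)) (((k : ℝ) + 1) / (n + 1))} with hEdef
  have hnpos : ∀ n : ℕ, (0 : ℝ) < n + 1 := fun n => by positivity
  have hEnull : ∀ n k, volume (E n k) = 0 := by
    intro n k
    refine null_of_expansive_aux U (n + 1) _ ?_ ?_
    · intro x hx y hy
      have hyx : |y - x| ≤ 1 / (n + 1) := by
        have h1 := hx.2.2
        have h2 := hy.2.2
        have hdd : ((k : ℝ) + 1) / (n + 1) - (k : ℝ) / (n + 1) = 1 / (n + 1) := by
          rw [div_sub_div_same]
          norm_num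
        rw [abs_le]
        constructor <;> linarith [h1.1, h1.2, h2.1, h2.2]
      have := hx.2.1 y hyx
      have hcast : ((↑(n + 1 : NNReal) : ℝ)) = (n : ℝ) + 1 := by push_cast; ring
      rw [Real.dist_eq, Real.dist_eq, hcast, abs_sub_comm x y, abs_sub_comm (U x) (U y)]
      exact this
    · refine measure_mono_null ?_ hN'0
      rintro _ ⟨t, ht, rfl⟩
      exact ht.1
  have hrad : volume {t : ℝ | ¬ DifferentiableAt ℝ U t} = 0 := by
    have := hU.ae_differentiableAt (μ := volume)
    rwa [ae_iff] at this
  have hBad : volume {t | t ∈ U ⁻¹' N' ∧ ¬ HasDerivAt U 0 t} = 0 := by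
    have hcover : {t | t ∈ U ⁻¹' N' ∧ ¬ HasDerivAt U 0 t} ⊆
        {t : ℝ | ¬ DifferentiableAt ℝ U t} ∪ ⋃ (n : ℕ) (k : ℤ), E n k := by
      rintro t ⟨htN, htD⟩
      by_cases hdiff : DifferentiableAt ℝ U t
      · right
        have hd : deriv U t ≠ 0 := by
          intro h0
          exact htD (h0 ▸ hdiff.hasDerivAt)
        have habs : 0 < |deriv U t| := abs_pos.mpr hd
        -- from differentiability: eventually |U y - U t| ≥ (|d|/2) |y - t|
        have hev : ∀ᶠ y in nhds t,
            ‖U y - U t - (y - t) * deriv U t‖ ≤ |deriv U t| / 2 * ‖y - t‖ := by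
          have := (hasDerivAt_iff_isLittleO.mp hdiff.hasDerivAt).def (by positivity :
            (0 : ℝ) < |deriv U t| / 2)
          simpa [smul_eq_mul, mul_comm] using this
        obtain ⟨δ, hδ, hball⟩ := Metric.eventually_nhds_iff.mp hev
        obtain ⟨n, hn⟩ := exists_nat_gt (max (1 / δ) (2 / |deriv U t|))
        have hn1 : 1 / δ < (n : ℝ) + 1 := lt_of_le_of_lt (le_max_left _ _) (by linarith)
        have hn2 : 2 / |deriv U t| ≤ (n : ℝ) + 1 :=
          le_of_lt (lt_of_le_of_lt (le_max_right _ _) (by linarith))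
        have hkey : ∀ y : ℝ, |y - t| ≤ 1 / (n + 1) → |y - t| ≤ (n + 1) * |U y - U t| := by
          intro y hy
          have hyδ : dist y t < δ := by
            rw [Real.dist_eq]
            calc |y - t| ≤ 1 / (n + 1) := hy
              _ < δ := by
                rw [div_lt_iff₀ (hnpos n)]
                rw [div_lt_iff₀ hδ] at hn1
                linarith
          have h1 := hball hyδ
          rw [Real.norm_eq_abs, Real.norm_eq_abs] at h1
          have h2 : |deriv U t| / 2 * |y - t| ≤ |U y - U t| := by
            have := abs_sub_abs_le_abs_sub ((y - t) * deriv U t) (U y - U t - (y - t) * deriv U t + (y - t) * deriv U t)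
            rw [abs_mul] at *
            have h3 : |(y - t)| * |deriv U t| - |U y - U t| ≤ |deriv U t| / 2 * |y - t| := by
              have h4 : |(y - t) * deriv U t| - |U y - U t| ≤ |U y - U t - (y - t) * deriv U t| := by
                have := abs_sub_abs_le_abs_sub ((y - t) * deriv U t) (U y - U t)
                calc |(y - t) * deriv U t| - |U y - U t|
                    ≤ |(y - t) * deriv U t - (U y - U t)| := this
                  _ = |U y - U t - (y - t) * deriv U t| := by rw [abs_sub_comm]
              rw [abs_mul] at h4
              linarith
            nlinarith [abs_nonneg (y - t), abs_nonneg (deriv U t)]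
          -- from 2/|d| ≤ n+1 : (n+1) * (|d|/2) ≥ 1
          have h5 : 1 ≤ ((n : ℝ) + 1) * (|deriv U t| / 2) := by
            rw [div_le_iff₀ habs] at hn2
            nlinarith
          calc |y - t| = 1 * |y - t| := (one_mul _).symm
            _ ≤ (((n : ℝ) + 1) * (|deriv U t| / 2)) * |y - t| :=
                mul_le_mul_of_nonneg_right h5 (abs_nonneg _)
            _ = ((n : ℝ) + 1) * (|deriv U t| / 2 * |y - t|) := by ring
            _ ≤ ((n : ℝ) + 1) * |U y - U t| :=
                mul_le_mul_of_nonneg_left h2 (le_of_lt (hnpos n))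
        refine mem_iUnion.mpr ⟨n, mem_iUnion.mpr ⟨⌊t * (n + 1)⌋, htN, hkey, ?_⟩⟩
        constructor
        · rw [div_le_iff₀ (hnpos n)]
          exact Int.floor_le _
        · rw [le_div_iff₀ (hnpos n)]
          exact le_of_lt (Int.lt_floor_add_one _)
      · exact Or.inl hdiff
    refine measure_mono_null hcover (measure_union_null hrad ?_)
    refine measure_iUnion_null fun n => measure_iUnion_null fun k => hEnull n k
  rw [ae_iff]
  refine measure_mono_null ?_ hBad
  intro t ht
  rw [mem_setOf_eq, Classical.not_imp] at ht
  exact ht
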